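/- arXiv:1411.6262 — 2 statements merged into one kernel-verified Lean document; each statement's English description precedes it below -/
import Mathlib

section
/- Let σ be an S-function with constants a_1, a_2, b_1, b_2. Let l_n > 0, K ∈ ℝ^n, and P a symmetric positive definite n×n real matrix such that for every ρ ∈ [a_1/b_1, a_2/b_2] the matrix (J_n − ρ l_n e_n Kᵀ)ᵀ P + P (J_n − ρ l_n e_n Kᵀ) + Id_n is negative semidefinite. Define V_0(x) = (xᵀ P x)^{1/2}, and let A > 0 satisfy max_{V_0(x) ≤ A} |Kᵀx| ≤ min(1, b_1, b_2). Then there exist positive constants c_0 and l_0 such that for every x ∈ ℝ^n ∖ {0} with V_0(x) ≤ A and every d ∈ ℝ: ∇V_0(x)·(J_n x − l_n e_n σ(Kᵀx + d)) ≤ −(c_0/2) V_0(x) + 4 l_0 min(1, |d|). -/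
open MeasureTheory Filter Matrix

noncomputable section

/-- The signed power `⌊x⌉^a = |x|^a · sign x`. -/
def sgnPow (x a : ℝ) : ℝ := |x| ^ a * Real.sign x

/-- The exponents `p_i = 1 - (i-1)/n`. -/
def pe (n i : ℕ) : ℝ := 1 - ((i : ℝ) - 1) / n

/-- The exponents `β_0 = p_2`, `β_i = (n-1+i)/(n-i)`. -/
def be (n i : ℕ) : ℝ := if i = 0 then pe n 2 else ((n : ℝ) - 1 + i) / ((n : ℝ) - i)

/-- The exponent `α = 2(n-1)/(2n-1)`. -/
def al (n : ℕ) : ℝ := 2 * ((n : ℝ) - 1) / (2 * (n : ℝ) - 1)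

/-- The recursively defined virtual controls `v_i`; states are 1-indexed sequences
(the 0-th coordinate is unused). -/
def vfb (n : ℕ) (l : ℕ → ℝ) : ℕ → (ℕ → ℝ) → ℝ
  | 0, _ => 0
  | i + 1, x =>
    -l (i + 1) *
      sgnPow (sgnPow (x (i + 1)) (be n i) - sgnPow (vfb n l i x) (be n i))
        (pe n (i + 2) / (pe n (i + 1) * be n i))

/-- `ω_i(x_1,…,x_i) = ⌊x_i⌉^{β_{i-1}} - ⌊v_{i-1}⌉^{β_{i-1}}`. -/
def omfb (n : ℕ) (l : ℕ → ℝ) (i : ℕ) (x : ℕ → ℝ) : ℝ :=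
  sgnPow (x i) (be n (i - 1)) - sgnPow (vfb n l (i - 1) x) (be n (i - 1))

/-- `W_i`. -/
def Wfb (n : ℕ) (l : ℕ → ℝ) (i : ℕ) (x : ℕ → ℝ) : ℝ :=
  (|x i| ^ (be n (i - 1) + 1) - |vfb n l (i - 1) x| ^ (be n (i - 1) + 1)) / (be n (i - 1) + 1) -
    sgnPow (vfb n l (i - 1) x) (be n (i - 1)) * (x i - vfb n l (i - 1) x)

/-- Embedding of `ℝ^n` into 1-indexed sequences. -/
def emb (n : ℕ) (x : Fin n → ℝ) (j : ℕ) : ℝ :=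
  if h : 1 ≤ j ∧ j ≤ n then x ⟨j - 1, by omega⟩ else 0

/-- The Lyapunov function `V_n = Σ_{i=1}^n W_i` on `ℝ^n`. -/
def Vn (n : ℕ) (l : ℕ → ℝ) (x : Fin n → ℝ) : ℝ :=
  ∑ i ∈ Finset.Icc 1 n, Wfb n l i (emb n x)

/-- `ω_n` on `ℝ^n`. -/
def omn (n : ℕ) (l : ℕ → ℝ) (x : Fin n → ℝ) : ℝ := omfb n l n (emb n x)

/-- The `n`-th Jordan block: `(J_n)_{ij} = 1` if `i = j - 1` (1-indexed), else `0`. -/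
def Jmat (n : ℕ) : Matrix (Fin n) (Fin n) ℝ :=
  Matrix.of fun i j => if (i : ℕ) + 1 = (j : ℕ) then 1 else 0

/-- The `i`-th standard basis vector of `ℝ^n` (1-indexed: `eVec n n = e_n`). -/
def eVec (n i : ℕ) : Fin n → ℝ := fun j => if (j : ℕ) + 1 = i then 1 else 0

/-- The standard saturation function `s(x) = x / max(1,|x|)`. -/
def satur (x : ℝ) : ℝ := x / max 1 |x|

/-- `σ` is an S-function with sector constants `a₁ ≤ a₂`, `b₁, b₂`, limit `si = σ_{+∞}`
at `+∞` (and `-si` at `-∞`) and decay constant `Cs`. -/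
structure IsSFun (σ : ℝ → ℝ) (a₁ a₂ b₁ b₂ si Cs : ℝ) : Prop where
  lip : LocallyLipschitz σ
  ha₁ : 0 < a₁
  h₁₂ : a₁ ≤ a₂
  hb₁ : 0 < b₁
  hb₂ : 0 < b₂
  hq : a₁ / b₁ ≤ a₂ / b₂
  lower : ∀ x : ℝ, a₁ * x * satur (x / b₁) ≤ x * σ x
  upper : ∀ x : ℝ, x * σ x ≤ a₂ * x * satur (x / b₂)
  limTop : Filter.Tendsto σ Filter.atTop (nhds si)
  limBot : Filter.Tendsto σ Filter.atBot (nhds (-si))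
  hC : 0 < Cs
  hdecay : ∀ x : ℝ, |σ |x| - si| ≤ Cs / (1 + |x|)

noncomputable def quadD {n : ℕ} (P : Matrix (Fin n) (Fin n) ℝ) (x : Fin n → ℝ) :
    (Fin n → ℝ) →L[ℝ] ℝ :=
  LinearMap.toContinuousLinearMap
    { toFun := fun v => x ⬝ᵥ (P *ᵥ v) + v ⬝ᵥ (P *ᵥ x)
      map_add' := by intro a b; simp [mulVec_add, dotProduct_add, add_dotProduct]; ring
      map_smul' := by intro c a; simp [mulVec_smul, dotProduct_smul, smul_dotProduct,
        smul_eq_mul]; ring }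

lemma quadD_apply {n : ℕ} (P : Matrix (Fin n) (Fin n) ℝ) (x v : Fin n → ℝ) :
    quadD P x v = x ⬝ᵥ (P *ᵥ v) + v ⬝ᵥ (P *ᵥ x) := rfl

lemma hasFDerivAt_quad {n : ℕ} (P : Matrix (Fin n) (Fin n) ℝ) (x : Fin n → ℝ) :
    HasFDerivAt (fun y : Fin n → ℝ => y ⬝ᵥ (P *ᵥ y)) (quadD P x) x := by
  have h1 : (fun y : Fin n → ℝ => y ⬝ᵥ (P *ᵥ y)) =
      fun y : Fin n → ℝ => ∑ i : Fin n, ∑ j : Fin n, P i j * (y i * y j) := by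
    funext y
    simp only [dotProduct, mulVec, Finset.mul_sum]
    congr 1; funext i; congr 1; funext j; ring
  rw [h1]
  have h2 : ∀ i j : Fin n, HasFDerivAt (fun y : Fin n → ℝ => P i j * (y i * y j))
      (P i j • (x j • (ContinuousLinearMap.proj i : (Fin n → ℝ) →L[ℝ] ℝ) +
        x i • (ContinuousLinearMap.proj j : (Fin n → ℝ) →L[ℝ] ℝ))) x := by
    intro i j
    have hi : HasFDerivAt (fun y : Fin n → ℝ => y i)
        (ContinuousLinearMap.proj i : (Fin n → ℝ) →L[ℝ] ℝ) x :=
      hasFDerivAt_apply i x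
    have hj : HasFDerivAt (fun y : Fin n → ℝ => y j)
        (ContinuousLinearMap.proj j : (Fin n → ℝ) →L[ℝ] ℝ) x :=
      hasFDerivAt_apply j x
    have := (hi.mul' hj).const_mul (P i j)
    refine this.congr_fderiv (Eq.symm ?_)
    ext v
    simp [smul_eq_mul]
    ring
  have h3 := HasFDerivAt.fun_sum (fun i (_ : i ∈ Finset.univ) =>
    HasFDerivAt.fun_sum (fun j (_ : j ∈ Finset.univ) => h2 i j))
  refine h3.congr_fderiv (Eq.symm ?_)
  ext v
  simp only [quadD_apply, ContinuousLinearMap.sum_apply, ContinuousLinearMap.smul_apply,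
    ContinuousLinearMap.add_apply, ContinuousLinearMap.proj_apply, smul_eq_mul,
    dotProduct, mulVec, Finset.mul_sum, Finset.sum_add_distrib]
  rw [← Finset.sum_add_distrib]
  congr 1; funext i
  rw [← Finset.sum_add_distrib]
  exact Finset.sum_congr rfl fun j _ => by ring

lemma satur_cont : Continuous satur := by
  apply Continuous.div continuous_id (continuous_const.max continuous_abs)
  intro x; positivity

lemma satur_zero : satur 0 = 0 := by simp [satur]

lemma abs_satur_le_one (x : ℝ) : |satur x| ≤ 1 := by
  rw [satur, abs_div]
  rw [abs_of_pos (show (0:ℝ) < max 1 |x| by positivity)]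
  rw [div_le_one (by positivity)]
  exact le_max_right _ _

lemma satur_nonneg {x : ℝ} (hx : 0 ≤ x) : 0 ≤ satur x := by
  apply div_nonneg hx; positivity

lemma satur_nonpos {x : ℝ} (hx : x ≤ 0) : satur x ≤ 0 := by
  apply div_nonpos_of_nonpos_of_nonneg hx; positivity

lemma satur_of_abs_le {x : ℝ} (hx : |x| ≤ 1) : satur x = x := by
  rw [satur, max_eq_left hx, div_one]

section sigma
variable {σ : ℝ → ℝ} {a₁ a₂ b₁ b₂ : ℝ}

lemma sigma_le_of_pos (ha₁ : 0 < a₁) {t : ℝ} (ht : 0 < t)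
    (hlow : a₁ * t * satur (t / b₁) ≤ t * σ t)
    (hup : t * σ t ≤ a₂ * t * satur (t / b₂)) :
    a₁ * satur (t / b₁) ≤ σ t ∧ σ t ≤ a₂ * satur (t / b₂) := by
  constructor
  · refine le_of_mul_le_mul_left ?_ ht
    calc t * (a₁ * satur (t / b₁)) = a₁ * t * satur (t / b₁) := by ring
      _ ≤ t * σ t := hlow
  · refine le_of_mul_le_mul_left ?_ ht
    calc t * σ t ≤ a₂ * t * satur (t / b₂) := hup
      _ = t * (a₂ * satur (t / b₂)) := by ring

lemma sigma_ge_of_neg (ha₁ : 0 < a₁) {t : ℝ} (ht : t < 0)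
    (hlow : a₁ * t * satur (t / b₁) ≤ t * σ t)
    (hup : t * σ t ≤ a₂ * t * satur (t / b₂)) :
    a₂ * satur (t / b₂) ≤ σ t ∧ σ t ≤ a₁ * satur (t / b₁) := by
  constructor
  · refine le_of_mul_le_mul_left ?_ (neg_pos.mpr ht)
    calc (-t) * (a₂ * satur (t / b₂)) = -(a₂ * t * satur (t / b₂)) := by ring
      _ ≤ -(t * σ t) := by linarith
      _ = (-t) * σ t := by ring
  · refine le_of_mul_le_mul_left ?_ (neg_pos.mpr ht)
    calc (-t) * σ t = -(t * σ t) := by ring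
      _ ≤ -(a₁ * t * satur (t / b₁)) := by linarith
      _ = (-t) * (a₁ * satur (t / b₁)) := by ring

lemma sigma_zero (hc : Continuous σ) (ha₁ : 0 < a₁) (hb₁ : 0 < b₁) (hb₂ : 0 < b₂)
    (hlow : ∀ x : ℝ, a₁ * x * satur (x / b₁) ≤ x * σ x)
    (hup : ∀ x : ℝ, x * σ x ≤ a₂ * x * satur (x / b₂)) : σ 0 = 0 := by
  have h1 : Tendsto σ (nhdsWithin 0 (Set.Ioi 0)) (nhds (σ 0)) :=
    (hc.tendsto 0).mono_left nhdsWithin_le_nhds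
  have hg : Tendsto (fun t : ℝ => a₁ * satur (t / b₁)) (nhdsWithin 0 (Set.Ioi 0)) (nhds 0) := by
    have : Continuous (fun t : ℝ => a₁ * satur (t / b₁)) :=
      continuous_const.mul (satur_cont.comp (continuous_id.div_const b₁))
    have h0 := (this.tendsto 0).mono_left (nhdsWithin_le_nhds (s := Set.Ioi (0:ℝ)))
    simpa [satur_zero] using h0
  have hh : Tendsto (fun t : ℝ => a₂ * satur (t / b₂)) (nhdsWithin 0 (Set.Ioi 0)) (nhds 0) := by
    have : Continuous (fun t : ℝ => a₂ * satur (t / b₂)) :=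
      continuous_const.mul (satur_cont.comp (continuous_id.div_const b₂))
    have h0 := (this.tendsto 0).mono_left (nhdsWithin_le_nhds (s := Set.Ioi (0:ℝ)))
    simpa [satur_zero] using h0
  have h2 : Tendsto σ (nhdsWithin 0 (Set.Ioi 0)) (nhds 0) := by
    apply tendsto_of_tendsto_of_tendsto_of_le_of_le' hg hh
    · filter_upwards [self_mem_nhdsWithin] with t ht
      exact (sigma_le_of_pos ha₁ ht (hlow t) (hup t)).1
    · filter_upwards [self_mem_nhdsWithin] with t ht
      exact (sigma_le_of_pos ha₁ ht (hlow t) (hup t)).2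
  exact tendsto_nhds_unique h1 h2

lemma sigma_bound (hc : Continuous σ) (ha₁ : 0 < a₁) (h₁₂ : a₁ ≤ a₂) (hb₁ : 0 < b₁)
    (hb₂ : 0 < b₂)
    (hlow : ∀ x : ℝ, a₁ * x * satur (x / b₁) ≤ x * σ x)
    (hup : ∀ x : ℝ, x * σ x ≤ a₂ * x * satur (x / b₂)) : ∀ t : ℝ, |σ t| ≤ a₂ := by
  have ha₂ : 0 < a₂ := ha₁.trans_le h₁₂
  intro t
  rcases lt_trichotomy t 0 with ht | ht | ht
  · obtain ⟨hl, hu⟩ := sigma_ge_of_neg ha₁ ht (hlow t) (hup t)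
    rw [abs_le]
    have hs₂ := abs_le.mp (abs_satur_le_one (t / b₂))
    have hs₁ : satur (t / b₁) ≤ 0 := satur_nonpos (div_nonpos_of_nonpos_of_nonneg ht.le hb₁.le)
    constructor
    · nlinarith
    · nlinarith
  · rw [ht, sigma_zero hc ha₁ hb₁ hb₂ hlow hup]; simpa using ha₂.le
  · obtain ⟨hl, hu⟩ := sigma_le_of_pos ha₁ ht (hlow t) (hup t)
    rw [abs_le]
    have hs₂ := abs_le.mp (abs_satur_le_one (t / b₂))
    have hs₁ : 0 ≤ satur (t / b₁) := satur_nonneg (by positivity)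
    constructor
    · nlinarith
    · nlinarith

lemma sigma_sector (hc : Continuous σ) (ha₁ : 0 < a₁) (hq : a₁ / b₁ ≤ a₂ / b₂) (hb₁ : 0 < b₁)
    (hb₂ : 0 < b₂)
    (hlow : ∀ x : ℝ, a₁ * x * satur (x / b₁) ≤ x * σ x)
    (hup : ∀ x : ℝ, x * σ x ≤ a₂ * x * satur (x / b₂)) :
    ∀ y : ℝ, |y| ≤ min b₁ b₂ → ∃ ρ ∈ Set.Icc (a₁ / b₁) (a₂ / b₂), σ y = ρ * y := by
  intro y hy
  rcases eq_or_ne y 0 with rfl | hy0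
  · exact ⟨a₁ / b₁, ⟨le_refl _, hq⟩, by
      rw [sigma_zero hc ha₁ hb₁ hb₂ hlow hup]; ring⟩
  · have hy₁ : |y / b₁| ≤ 1 := by
      rw [abs_div, abs_of_pos hb₁, div_le_one hb₁]
      exact hy.trans (min_le_left _ _)
    have hy₂ : |y / b₂| ≤ 1 := by
      rw [abs_div, abs_of_pos hb₂, div_le_one hb₂]
      exact hy.trans (min_le_right _ _)
    have hl := hlow y; have hu := hup y
    rw [satur_of_abs_le hy₁] at hl
    rw [satur_of_abs_le hy₂] at hu
    have hy2 : 0 < y * y := mul_self_pos.mpr hy0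
    refine ⟨σ y / y, ⟨?_, ?_⟩, by field_simp⟩
    · refine le_of_mul_le_mul_right ?_ hy2
      have h1 : σ y / y * (y * y) = y * σ y := by field_simp
      have h2 : a₁ / b₁ * (y * y) = a₁ * y * (y / b₁) := by field_simp
      rw [h1, h2]; exact hl
    · refine le_of_mul_le_mul_right ?_ hy2
      have h1 : σ y / y * (y * y) = y * σ y := by field_simp
      have h2 : a₂ / b₂ * (y * y) = a₂ * y * (y / b₂) := by field_simp
      rw [h1, h2]; exact hu

lemma lip_pair {σ : ℝ → ℝ} (hf : LocallyLipschitz σ) {a₂ : ℝ} (ha₂ : 0 < a₂)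
    (hbd : ∀ t : ℝ, |σ t| ≤ a₂) :
    ∃ M : ℝ, 0 < M ∧ ∀ w d : ℝ, |w| ≤ 1 → |d| ≤ 1 → |σ (w + d) - σ w| ≤ M * |d| := by
  have H : ∀ x : ℝ, ∃ (KK : NNReal) (ε : ℝ), 0 < ε ∧ LipschitzOnWith KK σ (Metric.ball x ε) := by
    intro x
    obtain ⟨K, t, ht, hl⟩ := hf x
    obtain ⟨ε, hε, hsub⟩ := Metric.mem_nhds_iff.mp ht
    exact ⟨K, ε, hε, hl.mono hsub⟩
  choose KK ε hε hlip using H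
  have hcov : Set.Icc (-2:ℝ) 2 ⊆ ⋃ x : ℝ, Metric.ball x (ε x / 2) := by
    intro y _
    exact Set.mem_iUnion.mpr ⟨y, by simp [Metric.mem_ball, half_pos (hε y)]⟩
  obtain ⟨t, ht⟩ := isCompact_Icc.elim_finite_subcover _
    (fun x => Metric.isOpen_ball) hcov
  have htne : t.Nonempty := by
    by_contra h
    rw [Finset.not_nonempty_iff_eq_empty] at h
    have h0 : (0:ℝ) ∈ Set.Icc (-2:ℝ) 2 := by norm_num
    have := ht h0
    simp [h] at this
  set δ : ℝ := t.inf' htne (fun x => ε x / 2) with hδdef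
  have hδ : 0 < δ := by
    rw [hδdef, Finset.lt_inf'_iff]
    exact fun b _ => half_pos (hε b)
  set Λ : ℝ := t.sup' htne (fun x => (KK x : ℝ)) with hΛdef
  refine ⟨max Λ (2 * a₂ / δ) + 1, ?_, ?_⟩
  · have : (0:ℝ) ≤ Λ := by
      obtain ⟨x, hx⟩ := htne
      exact le_trans (KK x).coe_nonneg (Finset.le_sup' (fun x => (KK x : ℝ)) hx)
    have : (0:ℝ) ≤ max Λ (2 * a₂ / δ) := le_trans this (le_max_left _ _)
    linarith
  · intro w d hw hd
    rcases le_or_gt |d| δ with hcase | hcase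
    · -- w ∈ Icc (-2) 2
      have hwC : w ∈ Set.Icc (-2:ℝ) 2 := by
        rw [Set.mem_Icc]; rw [abs_le] at hw; constructor <;> linarith [hw.1, hw.2]
      obtain ⟨x₀, hx₀t, hx₀⟩ := Set.mem_iUnion₂.mp (ht hwC)
      have hδle : δ ≤ ε x₀ / 2 := Finset.inf'_le _ hx₀t
      have hw1 : w ∈ Metric.ball x₀ (ε x₀) := by
        rw [Metric.mem_ball] at hx₀ ⊢
        linarith [half_pos (hε x₀), half_lt_self (hε x₀)]
      have hw2 : w + d ∈ Metric.ball x₀ (ε x₀) := by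
        rw [Metric.mem_ball, Real.dist_eq] at hx₀ ⊢
        have : |w + d - x₀| ≤ |d| + |w - x₀| := by
          calc |w + d - x₀| = |d + (w - x₀)| := by ring_nf
            _ ≤ |d| + |w - x₀| := abs_add_le _ _
        linarith
      have := (hlip x₀).dist_le_mul _ hw2 _ hw1
      rw [Real.dist_eq, Real.dist_eq] at this
      simp only [add_sub_cancel_left] at this
      calc |σ (w + d) - σ w| ≤ (KK x₀ : ℝ) * |d| := this
        _ ≤ (max Λ (2 * a₂ / δ) + 1) * |d| := by
            apply mul_le_mul_of_nonneg_right _ (abs_nonneg d)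
            have h1 : (KK x₀ : ℝ) ≤ Λ := Finset.le_sup' (fun x => (KK x : ℝ)) hx₀t
            have h2 : Λ ≤ max Λ (2 * a₂ / δ) := le_max_left _ _
            linarith
    · have h1 : |σ (w + d) - σ w| ≤ 2 * a₂ := by
        calc |σ (w + d) - σ w| ≤ |σ (w + d)| + |σ w| := abs_sub _ _
          _ ≤ 2 * a₂ := by linarith [hbd (w + d), hbd w]
      have h2 : 2 * a₂ ≤ (2 * a₂ / δ) * |d| := by
        rw [div_mul_eq_mul_div, le_div_iff₀ hδ]
        have : 0 ≤ 2 * a₂ := by linarith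
        nlinarith
      calc |σ (w + d) - σ w| ≤ (2 * a₂ / δ) * |d| := le_trans h1 h2
        _ ≤ (max Λ (2 * a₂ / δ) + 1) * |d| := by
            apply mul_le_mul_of_nonneg_right _ (abs_nonneg d)
            linarith [le_max_right Λ (2 * a₂ / δ)]

section mat
variable {n : ℕ} (P : Matrix (Fin n) (Fin n) ℝ)

lemma symmdot (hP : P.IsSymm) (u v : Fin n → ℝ) :
    u ⬝ᵥ (P *ᵥ v) = v ⬝ᵥ (P *ᵥ u) := by
  simp only [dotProduct, mulVec, Finset.mul_sum]
  rw [Finset.sum_comm]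
  apply Finset.sum_congr rfl; intro i _
  apply Finset.sum_congr rfl; intro j _
  rw [hP.apply i j]; ring

lemma csP (hP : P.IsSymm) (hpos : P.PosSemidef) (u v : Fin n → ℝ) :
    (u ⬝ᵥ (P *ᵥ v))^2 ≤ (u ⬝ᵥ (P *ᵥ u)) * (v ⬝ᵥ (P *ᵥ v)) := by
  have key : ∀ s : ℝ, 0 ≤ (u ⬝ᵥ (P *ᵥ u)) * (s * s) + (2 * (u ⬝ᵥ (P *ᵥ v))) * s
      + (v ⬝ᵥ (P *ᵥ v)) := by
    intro s
    have h := hpos.dotProduct_mulVec_nonneg (v + s • u)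
    simp only [star_trivial] at h
    have hexp : (v + s • u) ⬝ᵥ (P *ᵥ (v + s • u)) =
        (u ⬝ᵥ (P *ᵥ u)) * (s * s) + (2 * (u ⬝ᵥ (P *ᵥ v))) * s + (v ⬝ᵥ (P *ᵥ v)) := by
      rw [mulVec_add, mulVec_smul, dotProduct_add, add_dotProduct, add_dotProduct,
        dotProduct_smul, smul_dotProduct, smul_dotProduct, dotProduct_smul,
        symmdot P hP v u]
      simp only [smul_eq_mul]
      ring
    rw [hexp] at h
    exact h
  have hd := discrim_le_zero key
  rw [discrim] at hd
  nlinarith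

lemma frob_bound (x : Fin n → ℝ) :
    x ⬝ᵥ (P *ᵥ x) ≤ (∑ i : Fin n, ∑ j : Fin n, |P i j|) * (x ⬝ᵥ x) := by
  have hxx : ∀ i j : Fin n, |x i| * |x j| ≤ x ⬝ᵥ x := by
    intro i j
    have h1 : x i ^ 2 ≤ x ⬝ᵥ x := by
      rw [dotProduct]
      have := Finset.single_le_sum (f := fun k => x k * x k)
        (fun k _ => mul_self_nonneg (x k)) (Finset.mem_univ i)
      nlinarith
    have h2 : x j ^ 2 ≤ x ⬝ᵥ x := by
      rw [dotProduct]
      have := Finset.single_le_sum (f := fun k => x k * x k)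
        (fun k _ => mul_self_nonneg (x k)) (Finset.mem_univ j)
      nlinarith
    nlinarith [sq_abs (x i), sq_abs (x j), abs_nonneg (x i), abs_nonneg (x j),
      sq_nonneg (|x i| - |x j|)]
  calc x ⬝ᵥ (P *ᵥ x) = ∑ i : Fin n, ∑ j : Fin n, x i * (P i j * x j) := by
        simp only [dotProduct, mulVec, Finset.mul_sum]
    _ ≤ ∑ i : Fin n, ∑ j : Fin n, |P i j| * (x ⬝ᵥ x) := by
        apply Finset.sum_le_sum; intro i _
        apply Finset.sum_le_sum; intro j _
        calc x i * (P i j * x j) ≤ |x i * (P i j * x j)| := le_abs_self _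
          _ = |P i j| * (|x i| * |x j|) := by rw [abs_mul, abs_mul]; ring
          _ ≤ |P i j| * (x ⬝ᵥ x) := mul_le_mul_of_nonneg_left (hxx i j) (abs_nonneg _)
    _ = (∑ i : Fin n, ∑ j : Fin n, |P i j|) * (x ⬝ᵥ x) := by
        rw [Finset.sum_mul]
        apply Finset.sum_congr rfl; intro i _
        rw [Finset.sum_mul]

lemma lyap_quad {n : ℕ} (A P : Matrix (Fin n) (Fin n) ℝ) (hP : P.IsSymm)
    (h : (-(Aᵀ * P + P * A + 1)).PosSemidef) (y : Fin n → ℝ) :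
    2 * (y ⬝ᵥ (P *ᵥ (A *ᵥ y))) + y ⬝ᵥ y ≤ 0 := by
  have h2 := h.dotProduct_mulVec_nonneg y
  simp only [star_trivial] at h2
  have hexp : y ⬝ᵥ ((-(Aᵀ * P + P * A + 1)) *ᵥ y)
      = -(2 * (y ⬝ᵥ (P *ᵥ (A *ᵥ y))) + y ⬝ᵥ y) := by
    rw [neg_mulVec, dotProduct_neg, add_mulVec, add_mulVec, one_mulVec,
      dotProduct_add, dotProduct_add, ← mulVec_mulVec, ← mulVec_mulVec]
    rw [dotProduct_mulVec y Aᵀ, vecMul_transpose]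
    rw [symmdot P hP (A *ᵥ y) y]
    ring
  rw [hexp] at h2
  linarith

lemma vecMulVec_mulVec' {n : ℕ} (v w x : Fin n → ℝ) :
    (vecMulVec v w) *ᵥ x = (w ⬝ᵥ x) • v := by
  funext i
  simp [vecMulVec_apply, mulVec, dotProduct, Finset.mul_sum, mul_comm, mul_assoc, mul_left_comm]
end mat

/-- given an S-function `σ`, `l_n > 0`, `K ∈ ℝ^n` and a symmetric
positive definite `P` such that `(J_n - ρ l_n e_n Kᵀ)ᵀP + P(J_n - ρ l_n e_n Kᵀ) + Id`
is negative semidefinite for all `ρ ∈ [a₁/b₁, a₂/b₂]`, with `V₀(x) = (xᵀPx)^{1/2}`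
and `A > 0` such that `|Kᵀx| ≤ min(1,b₁,b₂)` on `{V₀ ≤ A}`, there are `c₀, l₀ > 0`
with `∇V₀(x)·(J_n x - l_n e_n σ(Kᵀx + d)) ≤ -(c₀/2)V₀(x) + 4 l₀ min(1,|d|)` on
`{V₀ ≤ A} ∖ {0}`. -/
theorem linear_region_ISS_inequality (n : ℕ) (hn : 0 < n)
    (σ : ℝ → ℝ) (a₁ a₂ b₁ b₂ si Cs : ℝ) (hσ : IsSFun σ a₁ a₂ b₁ b₂ si Cs)
    (L : ℝ) (hL : 0 < L) (K : Fin n → ℝ) (P : Matrix (Fin n) (Fin n) ℝ)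
    (hPsymm : P.IsSymm) (hPpos : P.PosDef)
    (hlyap : ∀ ρ ∈ Set.Icc (a₁ / b₁) (a₂ / b₂),
      (-((Jmat n - (ρ * L) • vecMulVec (eVec n n) K)ᵀ * P +
          P * (Jmat n - (ρ * L) • vecMulVec (eVec n n) K) + 1)).PosSemidef)
    (A : ℝ) (hA : 0 < A)
    (hAK : ∀ x : Fin n → ℝ, Real.sqrt (x ⬝ᵥ (P *ᵥ x)) ≤ A →
      |K ⬝ᵥ x| ≤ min 1 (min b₁ b₂)) :
    ∃ c₀ l₀ : ℝ, 0 < c₀ ∧ 0 < l₀ ∧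
      ∀ x : Fin n → ℝ, x ≠ 0 → Real.sqrt (x ⬝ᵥ (P *ᵥ x)) ≤ A → ∀ d : ℝ,
        fderiv ℝ (fun y : Fin n → ℝ => Real.sqrt (y ⬝ᵥ (P *ᵥ y))) x
            ((Jmat n) *ᵥ x - (L * σ (K ⬝ᵥ x + d)) • eVec n n) ≤
          -(c₀ / 2) * Real.sqrt (x ⬝ᵥ (P *ᵥ x)) + 4 * l₀ * min 1 |d| := by
  have hc : Continuous σ := hσ.lip.continuous
  have ha₂ : 0 < a₂ := hσ.ha₁.trans_le hσ.h₁₂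
  have hbd : ∀ t : ℝ, |σ t| ≤ a₂ :=
    sigma_bound hc hσ.ha₁ hσ.h₁₂ hσ.hb₁ hσ.hb₂ hσ.lower hσ.upper
  have hsec := sigma_sector hc hσ.ha₁ hσ.hq hσ.hb₁ hσ.hb₂ hσ.lower hσ.upper
  obtain ⟨Λ, hΛ, hΛp⟩ := lip_pair hσ.lip ha₂ hbd
  set e : Fin n → ℝ := eVec n n with hedef
  set j0 : Fin n := ⟨n - 1, Nat.sub_lt hn one_pos⟩ with hj0def
  have hj0v : (j0 : ℕ) = n - 1 := rfl
  have hj : e j0 = 1 := by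
    simp only [hedef, eVec]
    rw [if_pos (by omega)]
  have hne : e ≠ 0 := by
    intro h
    rw [h] at hj
    simp at hj
  have hePe : 0 < e ⬝ᵥ (P *ᵥ e) := by
    have := hPpos.dotProduct_mulVec_pos hne
    simpa using this
  have hee : 0 < e ⬝ᵥ e := by
    have h2 : e j0 * e j0 ≤ ∑ k : Fin n, e k * e k :=
      Finset.single_le_sum (f := fun k => e k * e k)
        (fun k _ => mul_self_nonneg (e k)) (Finset.mem_univ j0)
    rw [hj, mul_one] at h2
    rw [dotProduct]
    linarith
  set CP : ℝ := ∑ i : Fin n, ∑ j : Fin n, |P i j| with hCPdef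
  have hCP : 0 < CP := by
    have h1 := frob_bound P e
    nlinarith
  set M : ℝ := max Λ (2 * a₂) with hMdef
  have hM : 0 < M := lt_of_lt_of_le hΛ (le_max_left _ _)
  refine ⟨1 / CP, L * M * Real.sqrt (e ⬝ᵥ (P *ᵥ e)) / 4, one_div_pos.mpr hCP,
    div_pos (mul_pos (mul_pos hL hM) (Real.sqrt_pos.mpr hePe)) four_pos, ?_⟩
  intro x hx0 hxA d
  set c₀ : ℝ := 1 / CP with hc₀def
  set l₀ : ℝ := L * M * Real.sqrt (e ⬝ᵥ (P *ᵥ e)) / 4 with hl₀def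
  have hQpos : 0 < x ⬝ᵥ (P *ᵥ x) := by
    have := hPpos.dotProduct_mulVec_pos hx0
    simpa using this
  set S : ℝ := Real.sqrt (x ⬝ᵥ (P *ᵥ x)) with hSdef
  have hS : 0 < S := Real.sqrt_pos.mpr hQpos
  have hSS : S * S = x ⬝ᵥ (P *ᵥ x) := Real.mul_self_sqrt hQpos.le
  -- derivative
  have hder : HasFDerivAt (fun y : Fin n → ℝ => Real.sqrt (y ⬝ᵥ (P *ᵥ y)))
      ((1 / (2 * S)) • quadD P x) x := by
    have h1 := hasFDerivAt_quad P x
    have h2 : HasDerivAt Real.sqrt (1 / (2 * S)) (x ⬝ᵥ (P *ᵥ x)) :=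
      Real.hasDerivAt_sqrt hQpos.ne'
    exact h2.comp_hasFDerivAt x h1
  set w : ℝ := K ⬝ᵥ x with hwdef
  set u : ℝ := K ⬝ᵥ x + d with hudef
  set v : Fin n → ℝ := (Jmat n) *ᵥ x - (L * σ u) • e with hvdef
  have hval : fderiv ℝ (fun y : Fin n → ℝ => Real.sqrt (y ⬝ᵥ (P *ᵥ y))) x v
      = (x ⬝ᵥ (P *ᵥ v)) / S := by
    rw [hder.fderiv]
    simp only [ContinuousLinearMap.smul_apply, quadD_apply, smul_eq_mul]
    rw [symmdot P hPsymm v x]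
    field_simp
    ring
  have hawk : |w| ≤ min 1 (min b₁ b₂) := hAK x hxA
  obtain ⟨ρ, hρ, hσw⟩ := hsec w (hawk.trans (min_le_right _ _))
  set Δ : ℝ := σ u - ρ * w with hΔdef
  have hmin0 : 0 ≤ min 1 |d| := le_min zero_le_one (abs_nonneg d)
  have hΔbd : |Δ| ≤ M * min 1 |d| := by
    rcases le_or_gt |d| 1 with hcase | hcase
    · have hw1 : |w| ≤ 1 := hawk.trans (min_le_left _ _)
      have := hΛp w d hw1 hcase
      rw [min_eq_right hcase]
      have hΔeq : Δ = σ (w + d) - σ w := by rw [hΔdef, hσw, hudef, hwdef]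
      rw [hΔeq]
      calc |σ (w + d) - σ w| ≤ Λ * |d| := this
        _ ≤ M * |d| := mul_le_mul_of_nonneg_right (le_max_left _ _) (abs_nonneg d)
    · rw [min_eq_left hcase.le, mul_one]
      have h1 : |σ u| ≤ a₂ := hbd u
      have h2 : |ρ * w| ≤ a₂ := by rw [← hσw]; exact hbd w
      calc |Δ| ≤ |σ u| + |ρ * w| := abs_sub _ _
        _ ≤ 2 * a₂ := by linarith
        _ ≤ M := le_max_right _ _
  -- decomposition
  set Aρ : Matrix (Fin n) (Fin n) ℝ := Jmat n - (ρ * L) • vecMulVec e K with hAρdef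
  have hAx : Aρ *ᵥ x = (Jmat n) *ᵥ x - (ρ * L * w) • e := by
    rw [hAρdef, sub_mulVec, smul_mulVec, vecMulVec_mulVec', smul_smul, ← hwdef]
  have hveq : v = Aρ *ᵥ x - (L * Δ) • e := by
    rw [hAx, hvdef]
    have h1 : L * σ u = ρ * L * w + L * Δ := by rw [hΔdef]; ring
    rw [h1, add_smul]
    abel
  have hquad : 2 * (x ⬝ᵥ (P *ᵥ (Aρ *ᵥ x))) + x ⬝ᵥ x ≤ 0 :=
    lyap_quad Aρ P hPsymm (hlyap ρ hρ) x
  have hxPv : x ⬝ᵥ (P *ᵥ v) = x ⬝ᵥ (P *ᵥ (Aρ *ᵥ x)) - (L * Δ) * (x ⬝ᵥ (P *ᵥ e)) := by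
    rw [hveq, mulVec_sub, mulVec_smul, dotProduct_sub, dotProduct_smul, smul_eq_mul]
  have hxPe : |x ⬝ᵥ (P *ᵥ e)| ≤ S * Real.sqrt (e ⬝ᵥ (P *ᵥ e)) := by
    have h1 := csP P hPsymm hPpos.posSemidef x e
    calc |x ⬝ᵥ (P *ᵥ e)| = Real.sqrt ((x ⬝ᵥ (P *ᵥ e)) ^ 2) := (Real.sqrt_sq_eq_abs _).symm
      _ ≤ Real.sqrt ((x ⬝ᵥ (P *ᵥ x)) * (e ⬝ᵥ (P *ᵥ e))) := Real.sqrt_le_sqrt h1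
      _ = S * Real.sqrt (e ⬝ᵥ (P *ᵥ e)) := Real.sqrt_mul hQpos.le _
  have hterm : -(L * Δ) * (x ⬝ᵥ (P *ᵥ e)) ≤
      L * (M * min 1 |d|) * (S * Real.sqrt (e ⬝ᵥ (P *ᵥ e))) := by
    have h1 : -(L * Δ) * (x ⬝ᵥ (P *ᵥ e)) ≤ |L * Δ * (x ⬝ᵥ (P *ᵥ e))| := by
      calc -(L * Δ) * (x ⬝ᵥ (P *ᵥ e)) = -(L * Δ * (x ⬝ᵥ (P *ᵥ e))) := by ring
        _ ≤ |L * Δ * (x ⬝ᵥ (P *ᵥ e))| := neg_le_abs _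
    have h2 : |L * Δ * (x ⬝ᵥ (P *ᵥ e))| = L * |Δ| * |x ⬝ᵥ (P *ᵥ e)| := by
      rw [abs_mul, abs_mul, abs_of_pos hL]
    have h3 : L * |Δ| * |x ⬝ᵥ (P *ᵥ e)| ≤ L * (M * min 1 |d|) *
        (S * Real.sqrt (e ⬝ᵥ (P *ᵥ e))) := by
      apply mul_le_mul (by nlinarith) hxPe (abs_nonneg _) (by positivity)
    calc -(L * Δ) * (x ⬝ᵥ (P *ᵥ e)) ≤ |L * Δ * (x ⬝ᵥ (P *ᵥ e))| := h1
      _ = L * |Δ| * |x ⬝ᵥ (P *ᵥ e)| := h2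
      _ ≤ _ := h3
  have hfrob := frob_bound P x
  rw [← hCPdef] at hfrob
  clear_value S w u v Δ Aρ M CP c₀ l₀ e j0
  have hc₀CP : c₀ * CP = 1 := by
    rw [hc₀def]; field_simp
  have hkey : x ⬝ᵥ (P *ᵥ v) ≤ (-(c₀ / 2) * S + 4 * l₀ * min 1 |d|) * S := by
    have h4l : 4 * l₀ = L * M * Real.sqrt (e ⬝ᵥ (P *ᵥ e)) := by
      rw [hl₀def]; ring
    have hub : x ⬝ᵥ (P *ᵥ v) ≤ -(x ⬝ᵥ x) / 2 +
        L * (M * min 1 |d|) * (S * Real.sqrt (e ⬝ᵥ (P *ᵥ e))) := by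
      rw [hxPv]
      linarith [hquad, hterm]
    have hxx : c₀ * (x ⬝ᵥ (P *ᵥ x)) ≤ x ⬝ᵥ x := by
      have h5 : c₀ * (x ⬝ᵥ (P *ᵥ x)) ≤ c₀ * (CP * (x ⬝ᵥ x)) :=
        mul_le_mul_of_nonneg_left hfrob (le_of_lt (by rw [hc₀def]; exact one_div_pos.mpr hCP))
      calc c₀ * (x ⬝ᵥ (P *ᵥ x)) ≤ c₀ * (CP * (x ⬝ᵥ x)) := h5
        _ = (c₀ * CP) * (x ⬝ᵥ x) := by ring
        _ = x ⬝ᵥ x := by rw [hc₀CP, one_mul]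
    rw [← hSS] at hxx
    have hprod : L * (M * min 1 |d|) * (S * Real.sqrt (e ⬝ᵥ (P *ᵥ e)))
        = 4 * l₀ * min 1 |d| * S := by rw [h4l]; ring
    calc x ⬝ᵥ (P *ᵥ v) ≤ -(x ⬝ᵥ x) / 2 +
          L * (M * min 1 |d|) * (S * Real.sqrt (e ⬝ᵥ (P *ᵥ e))) := hub
      _ ≤ -(c₀ / 2) * (S * S) + 4 * l₀ * min 1 |d| * S := by
          rw [hprod]; linarith [hxx]
      _ = (-(c₀ / 2) * S + 4 * l₀ * min 1 |d|) * S := by ring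
  rw [hval]
  rw [div_le_iff₀ hS]
  exact hkey
end sigma
end
end

section
/- For any positive constants l_1, …, l_n: (a) W_i(x_1, …, x_i) ≥ 0 for every 1 ≤ i ≤ n and all arguments, with W_i(x_1,…,x_i) = 0 if and only if x_i = v_{i−1}(x_1,…,x_{i−1}); (b) V_n(x) ≥ 0 for all x ∈ ℝ^n and V_n(x) = 0 if and only if x = 0; (c) for each 1 ≤ i ≤ n there exists a constant C_i > 0 such that |x_i|^{β_{i−1}+1} ≤ C_i V_n(x) for all x = (x_1, …, x_n) ∈ ℝ^n. -/
open MeasureTheory Filter Matrix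

noncomputable section

lemma sgnPow_zero (a : ℝ) : sgnPow 0 a = 0 := by simp [sgnPow, Real.sign_zero]

lemma sgnPow_of_pos {x : ℝ} (h : 0 < x) (a : ℝ) : sgnPow x a = x ^ a := by
  rw [sgnPow, Real.sign_of_pos h, abs_of_pos h, mul_one]

lemma sgnPow_neg (x a : ℝ) : sgnPow (-x) a = -sgnPow x a := by
  rw [sgnPow, sgnPow, abs_neg, Real.sign_neg, mul_neg]

lemma abs_sgnPow_le (x a : ℝ) : |sgnPow x a| ≤ |x| ^ a := by
  rcases lt_trichotomy x 0 with h | h | h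
  · rw [sgnPow, Real.sign_of_neg h, mul_neg_one, abs_neg, abs_of_nonneg (Real.rpow_nonneg (abs_nonneg x) a)]
  · simp [h, sgnPow_zero, Real.rpow_nonneg]
  · rw [sgnPow, Real.sign_of_pos h, mul_one, abs_of_nonneg (Real.rpow_nonneg (abs_nonneg x) a)]

lemma abs_sgnPow {x : ℝ} (hx : x ≠ 0) (a : ℝ) : |sgnPow x a| = |x| ^ a := by
  rcases lt_trichotomy x 0 with h | h | h
  · rw [sgnPow, Real.sign_of_neg h, mul_neg_one, abs_neg, abs_of_nonneg (Real.rpow_nonneg (abs_nonneg x) a)]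
  · exact absurd h hx
  · rw [sgnPow, Real.sign_of_pos h, mul_one, abs_of_nonneg (Real.rpow_nonneg (abs_nonneg x) a)]

lemma sgnPow_nonneg {x : ℝ} (h : 0 ≤ x) (a : ℝ) : 0 ≤ sgnPow x a := by
  rcases h.eq_or_lt with h | h
  · simp [← h, sgnPow_zero]
  · rw [sgnPow_of_pos h]; exact Real.rpow_nonneg h.le a

lemma hasDerivAt_abs_rpow_sgn {q : ℝ} (hq : 1 < q) (x : ℝ) :
    HasDerivAt (fun t : ℝ => |t| ^ q) (q * sgnPow x (q - 1)) x := by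
  have h := hasDerivAt_abs_rpow x hq
  convert h using 1
  rcases eq_or_ne x 0 with rfl | hx
  · simp [sgnPow_zero]
  · rw [sgnPow]
    have habs : |x| ≠ 0 := abs_ne_zero.mpr hx
    have h2 : |x| ^ (q - 1) = |x| ^ (q - 2) * |x| := by
      rw [← Real.rpow_add_one habs]; ring_nf
    rw [h2]
    rcases hx.lt_or_gt with h | h
    · rw [Real.sign_of_neg h, abs_of_neg h]; ring
    · rw [Real.sign_of_pos h, abs_of_pos h]; ring

lemma rpow_superadd {a b p : ℝ} (ha : 0 ≤ a) (hb : 0 ≤ b) (hp : 1 ≤ p) :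
    a ^ p + b ^ p ≤ (a + b) ^ p := by
  have h := NNReal.add_rpow_le_rpow_add a.toNNReal b.toNNReal hp
  rw [← Real.toNNReal_add ha hb] at h
  have h2 := NNReal.coe_le_coe.mpr h
  rw [NNReal.coe_add, NNReal.coe_rpow, NNReal.coe_rpow, NNReal.coe_rpow,
    Real.coe_toNNReal _ ha, Real.coe_toNNReal _ hb,
    Real.coe_toNNReal _ (add_nonneg ha hb)] at h2
  exact h2

lemma rpow_add_le_two_rpow {a b p : ℝ} (ha : 0 ≤ a) (hb : 0 ≤ b) (hp : 1 ≤ p) :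
    (a + b) ^ p ≤ 2 ^ (p - 1) * (a ^ p + b ^ p) := by
  have h := NNReal.rpow_add_le_mul_rpow_add_rpow a.toNNReal b.toNNReal hp
  rw [← Real.toNNReal_add ha hb] at h
  have h2 := NNReal.coe_le_coe.mpr h
  rw [NNReal.coe_mul, NNReal.coe_add, NNReal.coe_rpow, NNReal.coe_rpow, NNReal.coe_rpow,
    NNReal.coe_rpow, NNReal.coe_ofNat, Real.coe_toNNReal _ ha, Real.coe_toNNReal _ hb,
    Real.coe_toNNReal _ (add_nonneg ha hb)] at h2
  exact h2

lemma sgnPow_of_nonneg {x : ℝ} (hx : 0 ≤ x) {a : ℝ} (ha : a ≠ 0) : sgnPow x a = x ^ a := by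
  rcases hx.eq_or_lt with h | h
  · rw [← h, sgnPow_zero, Real.zero_rpow ha]
  · exact sgnPow_of_pos h a

lemma key_ineq {β v t : ℝ} (hβ : 1 ≤ β) (h : v ≤ t) :
    2 ^ (1 - β) * (t - v) ^ β ≤ sgnPow t β - sgnPow v β := by
  have hβ0 : β ≠ 0 := by linarith
  have hc : (2:ℝ) ^ (1 - β) ≤ 1 :=
    Real.rpow_le_one_of_one_le_of_nonpos one_le_two (by linarith)
  have hc0 : (0:ℝ) ≤ 2 ^ (1 - β) := Real.rpow_nonneg (by norm_num) _
  have htv : (0:ℝ) ≤ t - v := by linarith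
  rcases le_total 0 v with hv | hv
  · have ht : (0:ℝ) ≤ t := le_trans hv h
    rw [sgnPow_of_nonneg hv hβ0, sgnPow_of_nonneg ht hβ0]
    have h1 : (t - v) ^ β + v ^ β ≤ t ^ β := by
      have := rpow_superadd htv hv hβ
      rwa [sub_add_cancel] at this
    have h2 : 2 ^ (1 - β) * (t - v) ^ β ≤ (t - v) ^ β := by
      nlinarith [Real.rpow_nonneg htv β]
    linarith
  · have e2 : sgnPow v β = -((-v) ^ β) := by
      have h' := sgnPow_neg v β
      rw [sgnPow_of_nonneg (by linarith : (0:ℝ) ≤ -v) hβ0] at h'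
      linarith
    rcases le_total t 0 with ht | ht
    · have e1 : sgnPow t β = -((-t) ^ β) := by
        have h' := sgnPow_neg t β
        rw [sgnPow_of_nonneg (by linarith : (0:ℝ) ≤ -t) hβ0] at h'
        linarith
      rw [e1, e2]
      have h1 : (t - v) ^ β + (-t) ^ β ≤ (-v) ^ β := by
        have := rpow_superadd htv (by linarith : (0:ℝ) ≤ -t) hβ
        rwa [show t - v + -t = -v by ring] at this
      have h2 : 2 ^ (1 - β) * (t - v) ^ β ≤ (t - v) ^ β := by
        nlinarith [Real.rpow_nonneg htv β]
      linarith
    · rw [sgnPow_of_nonneg ht hβ0, e2]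
      have h1 : (t + -v) ^ β ≤ 2 ^ (β - 1) * (t ^ β + (-v) ^ β) :=
        rpow_add_le_two_rpow ht (by linarith) hβ
      have h2 : 2 ^ (1 - β) * (t + -v) ^ β ≤ 2 ^ (1 - β) * (2 ^ (β - 1) * (t ^ β + (-v) ^ β)) :=
        mul_le_mul_of_nonneg_left h1 hc0
      have h3 : (2:ℝ) ^ (1 - β) * 2 ^ (β - 1) = 1 := by
        rw [← Real.rpow_add (by norm_num : (0:ℝ) < 2)]
        norm_num
      calc 2 ^ (1 - β) * (t - v) ^ β = 2 ^ (1 - β) * (t + -v) ^ β := by ring_nf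
        _ ≤ 2 ^ (1 - β) * (2 ^ (β - 1) * (t ^ β + (-v) ^ β)) := h2
        _ = (2 ^ (1 - β) * 2 ^ (β - 1)) * (t ^ β + (-v) ^ β) := by ring
        _ = t ^ β - -((-v) ^ β) := by rw [h3]; ring

lemma bregman_main {β : ℝ} (hβ : 1 ≤ β) (v x : ℝ) (hvx : v ≤ x) :
    2 ^ (1 - β) / (β + 1) * |x - v| ^ (β + 1) ≤
      (|x| ^ (β + 1) - |v| ^ (β + 1)) / (β + 1) - sgnPow v β * (x - v) := by
  set q : ℝ := β + 1 with hq
  have hq1 : 1 < q := by rw [hq]; linarith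
  have hq0 : q ≠ 0 := by rw [hq]; linarith
  have hqβ : q - 1 = β := by rw [hq]; ring
  set g : ℝ → ℝ := fun t =>
    (|t| ^ q - |v| ^ q) / q - sgnPow v β * (t - v) - 2 ^ (1 - β) / q * |t - v| ^ q with hg
  have hder : ∀ t : ℝ,
      HasDerivAt g (sgnPow t β - sgnPow v β - 2 ^ (1 - β) * sgnPow (t - v) β) t := by
    intro t
    have h1 : HasDerivAt (fun t : ℝ => (|t| ^ q - |v| ^ q) / q) (sgnPow t β) t := by
      have := ((hasDerivAt_abs_rpow_sgn hq1 t).sub_const (|v| ^ q)).div_const q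
      exact this.congr_deriv (by rw [hqβ, mul_div_cancel_left₀ _ hq0])
    have h2 : HasDerivAt (fun t : ℝ => sgnPow v β * (t - v)) (sgnPow v β) t := by
      simpa using (((hasDerivAt_id t).sub_const v).const_mul (sgnPow v β))
    have h3 : HasDerivAt (fun t : ℝ => 2 ^ (1 - β) / q * |t - v| ^ q)
        (2 ^ (1 - β) * sgnPow (t - v) β) t := by
      have hin : HasDerivAt (fun t : ℝ => |t - v| ^ q) (q * sgnPow (t - v) β * 1) t := by
        have := (hasDerivAt_abs_rpow_sgn hq1 (t - v)).comp t ((hasDerivAt_id t).sub_const v)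
        simpa [hqβ, Function.comp_def] using this
      have := hin.const_mul (2 ^ (1 - β) / q)
      exact this.congr_deriv (by rw [mul_one, ← mul_assoc, div_mul_cancel₀ _ hq0])
    exact (h1.sub h2).sub h3
  have hmono : MonotoneOn g (Set.Ici v) := by
    apply monotoneOn_of_deriv_nonneg (convex_Ici v)
    · exact fun t _ => (hder t).continuousAt.continuousWithinAt
    · exact fun t _ => (hder t).differentiableAt.differentiableWithinAt
    · intro t ht
      rw [interior_Ici] at ht
      rw [(hder t).deriv]
      have htv : v < t := ht
      rw [sgnPow_of_pos (by linarith : (0:ℝ) < t - v)]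
      have := key_ineq hβ htv.le
      linarith
  have hgv : g v = 0 := by
    simp only [hg, sub_self, abs_zero, mul_zero, Real.zero_rpow hq0, sub_zero]
    simp
  have := hmono (Set.mem_Ici.mpr le_rfl) (Set.mem_Ici.mpr hvx) hvx
  rw [hgv] at this
  simp only [hg] at this
  linarith

lemma bregman_ge {β : ℝ} (hβ : 1 ≤ β) (v x : ℝ) :
    2 ^ (1 - β) / (β + 1) * |x - v| ^ (β + 1) ≤
      (|x| ^ (β + 1) - |v| ^ (β + 1)) / (β + 1) - sgnPow v β * (x - v) := by
  rcases le_total v x with h | h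
  · exact bregman_main hβ v x h
  · have h2 := bregman_main hβ (-v) (-x) (by linarith)
    rw [show (-x) - (-v) = -(x - v) by ring, abs_neg, abs_neg, abs_neg, sgnPow_neg,
      neg_mul_neg] at h2
    exact h2

lemma pe_pos {n k : ℕ} (hn : 0 < n) (hk : k ≤ n) : 0 < pe n k := by
  unfold pe
  have hn' : (0:ℝ) < n := Nat.cast_pos.mpr hn
  have h1 : ((k:ℝ) - 1) / n < 1 := by
    rw [div_lt_one hn']
    have : (k:ℝ) ≤ n := Nat.cast_le.mpr hk
    linarith
  linarith

lemma be_zero_eq (n : ℕ) : be n 0 = 1 - 1 / n := by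
  unfold be pe
  norm_num

lemma one_le_be {n k : ℕ} (hk1 : 1 ≤ k) (hk : k < n) : 1 ≤ be n k := by
  unfold be
  rw [if_neg (by omega)]
  have h1 : (0:ℝ) < (n:ℝ) - k := by
    have : (k:ℝ) < n := Nat.cast_lt.mpr hk
    linarith
  rw [le_div_iff₀ h1]
  have : (1:ℝ) ≤ k := by exact_mod_cast hk1
  linarith

lemma one_le_q0 {n : ℕ} (hn : 0 < n) : 1 ≤ be n 0 + 1 := by
  rw [be_zero_eq]
  have h1 : (1:ℝ) / n ≤ 1 := by
    apply div_le_one_of_le₀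
    · exact_mod_cast hn
    · positivity
  linarith

lemma one_le_q {n k : ℕ} (hn : 0 < n) (hk : k < n) : 1 ≤ be n k + 1 := by
  rcases Nat.eq_zero_or_pos k with rfl | hk1
  · exact one_le_q0 hn
  · have := one_le_be hk1 hk
    linarith

lemma pe_mul_q {n k : ℕ} (hn : 0 < n) (hk1 : 1 ≤ k) (hk : k ≤ n) :
    pe n k * (be n (k - 1) + 1) = 2 - 1 / n := by
  have hn0 : (n:ℝ) ≠ 0 := Nat.cast_ne_zero.mpr hn.ne'
  rcases eq_or_lt_of_le hk1 with h1 | h2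
  · rw [← h1, be_zero_eq]
    unfold pe
    norm_num
    ring
  · have hk2 : 2 ≤ k := h2
    have hc : ((k - 1 : ℕ) : ℝ) = (k:ℝ) - 1 := by
      have : 1 ≤ k := hk1
      push_cast [Nat.cast_sub this]
      ring
    unfold pe be
    rw [if_neg (by omega : ¬ (k - 1 = 0)), hc]
    have hden : (n:ℝ) - ((k:ℝ) - 1) ≠ 0 := by
      have : (k:ℝ) ≤ n := Nat.cast_le.mpr hk
      intro hcon
      have hkn : (k:ℝ) = (n:ℝ) + 1 := by linarith
      have : (k:ℕ) = n + 1 := by exact_mod_cast hkn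
      omega
    field_simp
    ring

lemma vfb_eq_zero {n : ℕ} {l : ℕ → ℝ} :
    ∀ i (x : ℕ → ℝ), (∀ j, 1 ≤ j → j ≤ i → x j = 0) → vfb n l i x = 0 := by
  intro i
  induction i with
  | zero => intro x _; rfl
  | succ i ih =>
    intro x hx
    have h1 : x (i + 1) = 0 := hx (i + 1) (by omega) le_rfl
    have h2 : vfb n l i x = 0 := ih x fun j hj hj' => hx j hj (by omega)
    show -l (i + 1) * sgnPow (sgnPow (x (i + 1)) (be n i) - sgnPow (vfb n l i x) (be n i)) _ = 0
    rw [h1, h2, sgnPow_zero, sub_self, sgnPow_zero, mul_zero]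

lemma Wfb_one {n : ℕ} (hn : 0 < n) (l : ℕ → ℝ) (x : ℕ → ℝ) :
    Wfb n l 1 x = |x 1| ^ (be n 0 + 1) / (be n 0 + 1) := by
  have hq0 : be n 0 + 1 ≠ 0 := by have := one_le_q0 hn; linarith
  unfold Wfb
  have hv : vfb n l 0 x = 0 := rfl
  rw [show (1:ℕ) - 1 = 0 from rfl, hv, sgnPow_zero, abs_zero, Real.zero_rpow hq0]
  ring

lemma Wfb_part_a {n : ℕ} (hn : 0 < n) (l : ℕ → ℝ) :
    ∀ i : ℕ, 1 ≤ i → i ≤ n → ∀ x : ℕ → ℝ,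
      0 ≤ Wfb n l i x ∧ (Wfb n l i x = 0 ↔ x i = vfb n l (i - 1) x) := by
  intro i hi1 hin x
  rcases eq_or_lt_of_le hi1 with h1 | h2
  · -- i = 1
    subst h1
    rw [Wfb_one hn l x]
    have hq1 : 1 ≤ be n 0 + 1 := one_le_q0 hn
    have hq0 : be n 0 + 1 ≠ 0 := by linarith
    have hqpos : 0 < be n 0 + 1 := by linarith
    constructor
    · positivity
    · rw [div_eq_zero_iff]
      have hv : vfb n l 0 x = 0 := rfl
      rw [show (1:ℕ) - 1 = 0 from rfl, hv]
      constructor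
      · rintro (h | h)
        · have := (Real.rpow_eq_zero (abs_nonneg _) hq0).mp h
          exact abs_eq_zero.mp this
        · exact absurd h hq0
      · intro h
        left
        rw [h, abs_zero, Real.zero_rpow hq0]
  · -- 2 ≤ i
    have hi2 : 2 ≤ i := h2
    set β := be n (i - 1) with hβdef
    have hβ : 1 ≤ β := one_le_be (by omega) (by omega)
    set v := vfb n l (i - 1) x with hvdef
    have hW : Wfb n l i x =
        (|x i| ^ (β + 1) - |v| ^ (β + 1)) / (β + 1) - sgnPow v β * (x i - v) := rfl
    have hb := bregman_ge hβ v (x i)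
    have hc : 0 < 2 ^ (1 - β) / (β + 1) := by positivity
    have hq0 : β + 1 ≠ 0 := by linarith
    constructor
    · refine le_trans ?_ (hW ▸ hb)
      positivity
    · constructor
      · intro h0
        rw [hW] at h0
        rw [h0] at hb
        have habs : |x i - v| ^ (β + 1) = 0 := by
          have hnn : 0 ≤ |x i - v| ^ (β + 1) := Real.rpow_nonneg (abs_nonneg _) _
          nlinarith
        have := (Real.rpow_eq_zero (abs_nonneg _) hq0).mp habs
        have := abs_eq_zero.mp this
        linarith
      · intro h
        rw [hW, h]
        simp

lemma be_pos {n m : ℕ} (hn : 2 ≤ n) (hm : m < n) : 0 < be n m := by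
  rcases Nat.eq_zero_or_pos m with rfl | hm1
  · rw [be_zero_eq]
    have h1 : (1:ℝ)/n < 1 := by
      rw [div_lt_one (by exact_mod_cast Nat.lt_of_lt_of_le Nat.zero_lt_two hn : (0:ℝ) < n)]
      exact_mod_cast Nat.lt_of_lt_of_le Nat.one_lt_two hn
    linarith
  · linarith [one_le_be hm1 hm]

lemma Qlem {n : ℕ} (hn : 0 < n) {l : ℕ → ℝ} (hl : ∀ i, 0 < l i) :
    ∀ i : ℕ, 1 ≤ i → i ≤ n → ∃ C : ℝ, 0 < C ∧ ∀ x : ℕ → ℝ,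
      |x i| ^ (be n (i - 1) + 1) + |vfb n l (i - 1) x| ^ (be n (i - 1) + 1)
        ≤ C * ∑ j ∈ Finset.Icc 1 i, Wfb n l j x := by
  intro i
  induction i with
  | zero => omega
  | succ k ih =>
    intro _ hin
    rcases Nat.eq_zero_or_pos k with rfl | hk1
    · -- base case i = 1
      refine ⟨be n 0 + 1, by linarith [one_le_q0 hn], fun x => ?_⟩
      have hq0 : be n 0 + 1 ≠ 0 := by linarith [one_le_q0 hn]
      have hv : vfb n l 0 x = 0 := rfl
      rw [show (1:ℕ) - 1 = 0 from rfl, hv, abs_zero, Real.zero_rpow hq0,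
        Finset.Icc_self, Finset.sum_singleton, Wfb_one hn l x]
      rw [mul_div_cancel₀ _ hq0]
      linarith
    · -- inductive step: index k+1 with k ≥ 1
      obtain ⟨m, rfl⟩ := Nat.exists_eq_succ_of_ne_zero hk1.ne'
      -- index is m+2, previous index is m+1
      show ∃ C : ℝ, 0 < C ∧ ∀ x : ℕ → ℝ,
        |x (m + 2)| ^ (be n (m + 1) + 1) + |vfb n l (m + 1) x| ^ (be n (m + 1) + 1)
          ≤ C * ∑ j ∈ Finset.Icc 1 (m + 2), Wfb n l j x
      have hn2 : 2 ≤ n := by omega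
      obtain ⟨C', hC', hIH⟩ := ih (by omega) (by omega)
      set β : ℝ := be n (m + 1) with hβdef
      set β' : ℝ := be n m with hβ'def
      have hβ : 1 ≤ β := one_le_be (by omega) (by omega)
      have hβ' : 0 < β' := be_pos hn2 (by omega)
      have hq' : 1 ≤ β' + 1 := by linarith
      have hq : 1 ≤ β + 1 := by linarith
      have hc0 : (0:ℝ) < 2 ^ (1 - β) / (β + 1) := by positivity
      set s : ℝ := (β' + 1) / β' with hsdef
      have hs : 1 ≤ s := by rw [hsdef, le_div_iff₀ hβ']; linarith
      have hlm : 0 < l (m + 1) := hl (m + 1)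
      -- exponent identity
      have hpe2 := pe_mul_q hn (k := m + 2) (by omega) hin
      have hpe1 := pe_mul_q hn (k := m + 1) (by omega) (by omega)
      rw [show (m + 2 - 1 : ℕ) = m + 1 from rfl] at hpe2
      rw [show (m + 1 - 1 : ℕ) = m from rfl] at hpe1
      have hpe1pos : 0 < pe n (m + 1) := pe_pos hn (by omega)
      have hkey : pe n (m + 2) / (pe n (m + 1) * β') * (β + 1) = s := by
        rw [hsdef]
        field_simp
        nlinarith [hpe2, hpe1]
      set e : ℝ := pe n (m + 2) / (pe n (m + 1) * β') with hedef
      set K1 : ℝ := 2 ^ (β + 1 - 1) / (2 ^ (1 - β) / (β + 1)) with hK1def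
      set K2 : ℝ := (2 ^ (β + 1 - 1) + 1) * (l (m + 1) ^ (β + 1) * (2 ^ (s - 1) * C')) with hK2def
      have h2q : (0:ℝ) < 2 ^ (β + 1 - 1) := by positivity
      have hlq : (0:ℝ) < l (m + 1) ^ (β + 1) := Real.rpow_pos_of_pos hlm _
      have h2s : (0:ℝ) < 2 ^ (s - 1) := by positivity
      have hK1pos : 0 < K1 := by positivity
      have hK2pos : 0 < K2 := by positivity
      have hK1c0 : K1 * (2 ^ (1 - β) / (β + 1)) = 2 ^ (β + 1 - 1) :=
        div_mul_cancel₀ _ hc0.ne'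
      clear_value K1 K2
      refine ⟨K1 + K2, add_pos hK1pos hK2pos, fun x => ?_⟩
      set v : ℝ := vfb n l (m + 1) x with hvdef
      set w : ℝ := vfb n l m x with hwdef
      set ω : ℝ := sgnPow (x (m + 1)) β' - sgnPow w β' with hωdef
      have hvform : v = -l (m + 1) * sgnPow ω e := rfl
      set S : ℝ := ∑ j ∈ Finset.Icc 1 (m + 1), Wfb n l j x with hSdef
      set W : ℝ := Wfb n l (m + 2) x with hWdef
      have hIH2 : ∀ y : ℕ → ℝ, |y (m + 1)| ^ (β' + 1) + |vfb n l m y| ^ (β' + 1) ≤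
          C' * ∑ j ∈ Finset.Icc 1 (m + 1), Wfb n l j y := fun y => hIH y
      have hWform : W =
          (|x (m + 2)| ^ (β + 1) - |v| ^ (β + 1)) / (β + 1) - sgnPow v β * (x (m + 2) - v) := rfl
      have hb := bregman_ge hβ v (x (m + 2))
      rw [← hWform] at hb
      clear_value v w ω S W
      clear_value β β' s e
      have hd2 : 2 ^ (β + 1 - 1) * |x (m + 2) - v| ^ (β + 1) ≤ K1 * W := by
        have h := mul_le_mul_of_nonneg_left hb hK1pos.le
        calc 2 ^ (β + 1 - 1) * |x (m + 2) - v| ^ (β + 1)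
            = K1 * (2 ^ (1 - β) / (β + 1) * |x (m + 2) - v| ^ (β + 1)) := by
              rw [← hK1c0]; ring
          _ ≤ K1 * W := h
      -- step 2 : |x (m+2)|^(β+1) ≤ 2^β * (|x-v|^(β+1) + |v|^(β+1))
      have habs : |x (m + 2)| ≤ |x (m + 2) - v| + |v| := by
        calc |x (m + 2)| = |(x (m + 2) - v) + v| := by ring_nf
          _ ≤ |x (m + 2) - v| + |v| := abs_add_le _ _
      have hs2 : |x (m + 2)| ^ (β + 1) ≤
          2 ^ (β + 1 - 1) * (|x (m + 2) - v| ^ (β + 1) + |v| ^ (β + 1)) := by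
        calc |x (m + 2)| ^ (β + 1) ≤ (|x (m + 2) - v| + |v|) ^ (β + 1) :=
              Real.rpow_le_rpow (abs_nonneg _) habs (by linarith)
          _ ≤ _ := rpow_add_le_two_rpow (abs_nonneg _) (abs_nonneg _) hq
      -- step 3 : |v|^(β+1) ≤ K2' * S
      have hvabs : |v| ≤ l (m + 1) * |ω| ^ e := by
        rw [hvform, neg_mul, abs_neg, abs_mul, abs_of_pos hlm]
        exact mul_le_mul_of_nonneg_left (abs_sgnPow_le _ _) hlm.le
      have hωnn : (0:ℝ) ≤ |ω| ^ e := Real.rpow_nonneg (abs_nonneg _) _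
      have hvq : |v| ^ (β + 1) ≤ l (m + 1) ^ (β + 1) * |ω| ^ s := by
        calc |v| ^ (β + 1) ≤ (l (m + 1) * |ω| ^ e) ^ (β + 1) :=
              Real.rpow_le_rpow (abs_nonneg _) hvabs (by linarith)
          _ = l (m + 1) ^ (β + 1) * (|ω| ^ e) ^ (β + 1) :=
              Real.mul_rpow hlm.le hωnn
          _ = l (m + 1) ^ (β + 1) * |ω| ^ (e * (β + 1)) := by
              rw [← Real.rpow_mul (abs_nonneg _)]
          _ = l (m + 1) ^ (β + 1) * |ω| ^ s := by rw [hkey]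
      have hω : |ω| ≤ |x (m + 1)| ^ β' + |w| ^ β' := by
        calc |ω| ≤ |sgnPow (x (m + 1)) β'| + |sgnPow w β'| := by
              rw [hωdef, sub_eq_add_neg]
              exact (abs_add_le _ _).trans (by rw [abs_neg])
          _ ≤ |x (m + 1)| ^ β' + |w| ^ β' :=
              add_le_add (abs_sgnPow_le _ _) (abs_sgnPow_le _ _)
      have hβs : β' * s = β' + 1 := by
        rw [hsdef]; field_simp
      have hωs : |ω| ^ s ≤ 2 ^ (s - 1) * (|x (m + 1)| ^ (β' + 1) + |w| ^ (β' + 1)) := by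
        calc |ω| ^ s ≤ (|x (m + 1)| ^ β' + |w| ^ β') ^ s :=
              Real.rpow_le_rpow (abs_nonneg _) hω (by linarith)
          _ ≤ 2 ^ (s - 1) * ((|x (m + 1)| ^ β') ^ s + (|w| ^ β') ^ s) :=
              rpow_add_le_two_rpow (Real.rpow_nonneg (abs_nonneg _) _)
                (Real.rpow_nonneg (abs_nonneg _) _) hs
          _ = 2 ^ (s - 1) * (|x (m + 1)| ^ (β' + 1) + |w| ^ (β' + 1)) := by
              rw [← Real.rpow_mul (abs_nonneg _), ← Real.rpow_mul (abs_nonneg _), hβs]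
      have hs3 : |v| ^ (β + 1) ≤ l (m + 1) ^ (β + 1) * (2 ^ (s - 1) * (C' * S)) := by
        have h1 : |ω| ^ s ≤ 2 ^ (s - 1) * (C' * S) := by
          refine hωs.trans (mul_le_mul_of_nonneg_left ?_ h2s.le)
          rw [hwdef, hSdef]
          exact hIH2 x
        calc |v| ^ (β + 1) ≤ l (m + 1) ^ (β + 1) * |ω| ^ s := hvq
          _ ≤ _ := mul_le_mul_of_nonneg_left h1 hlq.le
      -- sum splitting and nonnegativity
      have hWnn : 0 ≤ W := by
        rw [hWdef]
        exact (Wfb_part_a hn l (m + 2) (by omega) (by omega) x).1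
      have hSnn : 0 ≤ S := by
        rw [hSdef]
        apply Finset.sum_nonneg
        intro j hj
        rw [Finset.mem_Icc] at hj
        exact (Wfb_part_a hn l j hj.1 (by omega) x).1
      have hsum : ∑ j ∈ Finset.Icc 1 (m + 2), Wfb n l j x = S + W := by
        rw [hSdef, hWdef]
        exact Finset.sum_Icc_succ_top (by omega) _
      rw [hsum]
      have hfin1 : |x (m + 2)| ^ (β + 1) + |v| ^ (β + 1) ≤
          K1 * W + (2 ^ (β + 1 - 1) + 1) * |v| ^ (β + 1) := by linarith [hs2, hd2]
      have hfin2 : (2 ^ (β + 1 - 1) + 1) * |v| ^ (β + 1) ≤ K2 * S := by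
        rw [hK2def]
        have := mul_le_mul_of_nonneg_left hs3 (by positivity : (0:ℝ) ≤ 2 ^ (β + 1 - 1) + 1)
        calc (2 ^ (β + 1 - 1) + 1) * |v| ^ (β + 1)
            ≤ (2 ^ (β + 1 - 1) + 1) * (l (m + 1) ^ (β + 1) * (2 ^ (s - 1) * (C' * S))) := this
          _ = (2 ^ (β + 1 - 1) + 1) * (l (m + 1) ^ (β + 1) * (2 ^ (s - 1) * C')) * S := by ring
      have hexp : (K1 + K2) * (S + W) = K1 * W + K2 * S + K1 * S + K2 * W := by ring
      linarith [hfin1, hfin2, mul_nonneg hK1pos.le hSnn, mul_nonneg hK2pos.le hWnn, hexp]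

lemma emb_eq {n : ℕ} (x : Fin n → ℝ) {j : ℕ} (h1 : 1 ≤ j) (h2 : j ≤ n) :
    emb n x j = x ⟨j - 1, Nat.lt_of_lt_of_le (Nat.sub_lt h1 Nat.one_pos) h2⟩ := by
  unfold emb; rw [dif_pos ⟨h1, h2⟩]


/-- for any positive gains: (a) `W_i ≥ 0` with `W_i = 0` iff
`x_i = v_{i-1}(x_1,…,x_{i-1})`; (b) `V_n ≥ 0` with `V_n(x) = 0` iff `x = 0`;
(c) for each `1 ≤ i ≤ n` there is `C_i > 0` with
`|x_i|^{β_{i-1}+1} ≤ C_i V_n(x)` for all `x ∈ ℝ^n`. -/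
theorem positivity_and_coercivity_of_V (n : ℕ) (hn : 0 < n)
    (l : ℕ → ℝ) (hl : ∀ i, 0 < l i) :
    (∀ i : ℕ, 1 ≤ i → i ≤ n → ∀ x : ℕ → ℝ,
      0 ≤ Wfb n l i x ∧ (Wfb n l i x = 0 ↔ x i = vfb n l (i - 1) x)) ∧
    (∀ x : Fin n → ℝ, 0 ≤ Vn n l x ∧ (Vn n l x = 0 ↔ x = 0)) ∧
    ∀ i : ℕ, ∀ _ : 1 ≤ i, ∀ h2 : i ≤ n, ∃ C : ℝ, 0 < C ∧
      ∀ x : Fin n → ℝ,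
        |x ⟨i - 1, by omega⟩| ^ (be n (i - 1) + 1) ≤ C * Vn n l x := by
  have ha := Wfb_part_a hn l
  refine ⟨ha, ?_, ?_⟩
  · intro x
    have hnn0 : ∀ j ∈ Finset.Icc 1 n, 0 ≤ Wfb n l j (emb n x) := fun j hj => by
      rw [Finset.mem_Icc] at hj
      exact (ha j hj.1 hj.2 (emb n x)).1
    have hnn : 0 ≤ Vn n l x := Finset.sum_nonneg hnn0
    refine ⟨hnn, ?_, ?_⟩
    · intro h0
      have hz : ∀ j ∈ Finset.Icc 1 n, Wfb n l j (emb n x) = 0 :=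
        (Finset.sum_eq_zero_iff_of_nonneg hnn0).mp h0
      have hind : ∀ j, j ≤ n → 1 ≤ j → emb n x j = 0 := by
        intro j
        induction j using Nat.strong_induction_on with
        | _ j ihj =>
          intro hjn hj1
          have hWj := hz j (Finset.mem_Icc.mpr ⟨hj1, hjn⟩)
          have heq := ((ha j hj1 hjn (emb n x)).2).mp hWj
          have hv0 : vfb n l (j - 1) (emb n x) = 0 :=
            vfb_eq_zero (j - 1) _ (fun k hk1 hk2 => ihj k (by omega) (by omega) hk1)
          rw [heq, hv0]
      funext j
      have h := hind ((j : ℕ) + 1) (by omega) (by omega)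
      rw [emb_eq x (by omega) (by omega)] at h
      simpa using h
    · intro h0
      subst h0
      apply Finset.sum_eq_zero
      intro j hj
      rw [Finset.mem_Icc] at hj
      apply ((ha j hj.1 hj.2 (emb n (0 : Fin n → ℝ))).2).mpr
      have hz : ∀ k, 1 ≤ k → k ≤ j - 1 → emb n (0 : Fin n → ℝ) k = 0 := by
        intro k _ _
        unfold emb
        split <;> simp
      rw [vfb_eq_zero (j - 1) _ hz]
      unfold emb
      split <;> simp
  · intro i hi1 hi2
    obtain ⟨C, hC, hQ⟩ := Qlem hn hl i hi1 hi2
    refine ⟨C, hC, fun x => ?_⟩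
    have h1 := hQ (emb n x)
    have h2 : |emb n x i| ^ (be n (i - 1) + 1) ≤
        C * ∑ j ∈ Finset.Icc 1 i, Wfb n l j (emb n x) := by
      have := Real.rpow_nonneg (abs_nonneg (vfb n l (i - 1) (emb n x))) (be n (i - 1) + 1)
      linarith
    have h3 : ∑ j ∈ Finset.Icc 1 i, Wfb n l j (emb n x) ≤ Vn n l x := by
      unfold Vn
      apply Finset.sum_le_sum_of_subset_of_nonneg (Finset.Icc_subset_Icc_right hi2)
      intro j hj _
      rw [Finset.mem_Icc] at hj
      exact (ha j hj.1 hj.2 _).1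
    rw [emb_eq x hi1 hi2] at h2
    exact h2.trans (mul_le_mul_of_nonneg_left h3 hC.le)
end
end
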